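/- Let ℓ ∈ (0,1] and c₁, c₂ ∈ [ℓ,1]. Consider a two-armed pulling scheme: a sequence (a_t)_{t≥1} with a_t ∈ {1,2}, both arms pulled once initially, per-pull costs in [ℓ,1]; let N_i(t) be the number of pulls of arm i up to time t, ĉ_i(t) the empirical mean cost of arm i, and J(t) = ĉ₁(t)N₁(t) + ĉ₂(t)N₂(t) the cumulative cost. Suppose the sampling rule is: at each round t+1 (t ≥ 2), pull arm 2 if √(ĉ₂(t))·N₂(t) ≤ √(ĉ₁(t))·N₁(t), and otherwise pull arm 1. If ĉ_i(t) → c_i as t → ∞ for i = 1,2, then ĉ_i(t)·N_i(t)/J(t) → √(c_i)/(√c₁ + √c₂) as t → ∞ for i = 1,2. (Deterministic content of Lemma 20: under the Chernoff-Overlap square-root sampling rule in a two-armed bandit, the empirical cost proportions converge to the optimal proportions √c_i/(√c₁+√c₂).) -/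

import Mathlib

open Filter

set_option maxHeartbeats 1000000

/-- deterministic content of Lemma 20: under the
Chernoff-Overlap square-root sampling rule in a two-armed bandit (arm `0`
plays the role of arm 1 and arm `1` the role of arm 2; at round `t+1` arm
`1` is pulled iff `√(ĉ₁(t))·N₁(t) ≤ √(ĉ₀(t))·N₀(t)`), if the empirical
mean costs converge to `c_i ∈ [ℓ,1]`, then the empirical cost proportions
`ĉ_i(t)N_i(t)/J(t)` converge to `√c_i/(√c₀+√c₁)`. -/
theorem chernoff_overlap_proportion_convergence
    (ℓ : ℝ) (hℓ : ℓ ∈ Set.Ioc (0 : ℝ) 1)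
    (c : Fin 2 → ℝ) (hc : ∀ i, c i ∈ Set.Icc ℓ 1)
    (pull : ℕ → Fin 2) (C : ℕ → ℝ)
    (hC : ∀ t : ℕ, 1 ≤ t → C t ∈ Set.Icc ℓ 1) :
    let N : Fin 2 → ℕ → ℕ := fun i t => ((Finset.Icc 1 t).filter fun s => pull s = i).card
    let chat : Fin 2 → ℕ → ℝ := fun i t =>
      (∑ s ∈ (Finset.Icc 1 t).filter fun s => pull s = i, C s) / (N i t : ℝ)
    let J : ℕ → ℝ := fun t => chat 0 t * (N 0 t : ℝ) + chat 1 t * (N 1 t : ℝ)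
    pull 1 = 0 → pull 2 = 1 →
    (∀ t : ℕ, 2 ≤ t →
      pull (t + 1) =
        if Real.sqrt (chat 1 t) * (N 1 t : ℝ) ≤ Real.sqrt (chat 0 t) * (N 0 t : ℝ)
        then (1 : Fin 2) else 0) →
    (∀ i : Fin 2, Tendsto (fun t => chat i t) atTop (nhds (c i))) →
    ∀ i : Fin 2,
      Tendsto (fun t => chat i t * (N i t : ℝ) / J t) atTop
        (nhds (Real.sqrt (c i) / (Real.sqrt (c 0) + Real.sqrt (c 1)))) := by
  obtain ⟨hℓ0, hℓ1⟩ := hℓ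
  intro N chat J h1 h2 hrule hconv
  set s0 := Real.sqrt (c 0) with hs0def
  set s1 := Real.sqrt (c 1) with hs1def
  have hc0pos : 0 < c 0 := lt_of_lt_of_le hℓ0 (hc 0).1
  have hc1pos : 0 < c 1 := lt_of_lt_of_le hℓ0 (hc 1).1
  have hs0 : 0 < s0 := Real.sqrt_pos.2 hc0pos
  have hs1 : 0 < s1 := Real.sqrt_pos.2 hc1pos
  have hs01 : 0 < s0 + s1 := by linarith
  have hs0le : s0 ≤ 1 := Real.sqrt_le_one.2 (hc 0).2
  have hs1le : s1 ≤ 1 := Real.sqrt_le_one.2 (hc 1).2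
  have hc0eq : c 0 = s0 ^ 2 := (Real.sq_sqrt hc0pos.le).symm
  have hc1eq : c 1 = s1 ^ 2 := (Real.sq_sqrt hc1pos.le).symm
  -- basic facts about N
  have fin2 : ∀ x : Fin 2, (x = 1) ↔ ¬(x = 0) := by decide
  have hNsum : ∀ t : ℕ, N 0 t + N 1 t = t := by
    intro t
    have h := Finset.card_filter_add_card_filter_not
      (s := Finset.Icc 1 t) (p := fun s => pull s = 0)
    have he : ((Finset.Icc 1 t).filter fun s => pull s = 1)
        = ((Finset.Icc 1 t).filter fun s => ¬ pull s = 0) :=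
      Finset.filter_congr (fun x _ => by simpa using fin2 (pull x))
    simp only [N, he]
    rw [h, Nat.card_Icc]; omega
  have hNle : ∀ (i : Fin 2) (t : ℕ), N i t ≤ t := by
    intro i t
    refine le_trans (Finset.card_filter_le _ _) ?_
    simp [Nat.card_Icc]
  have hNsucc : ∀ (i : Fin 2) (t : ℕ),
      N i (t + 1) = N i t + if pull (t + 1) = i then 1 else 0 := by
    intro i t
    have hins : Finset.Icc 1 (t + 1) = insert (t + 1) (Finset.Icc 1 t) := by
      ext x; simp only [Finset.mem_Icc, Finset.mem_insert]; omega
    simp only [N, hins, Finset.filter_insert]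
    split
    · rw [Finset.card_insert_of_notMem (by simp [Finset.mem_filter, Finset.mem_Icc])]
    · simp
  have hsq : ∀ i : Fin 2,
      Tendsto (fun t => Real.sqrt (chat i t)) atTop (nhds (Real.sqrt (c i))) :=
    fun i => (Real.continuous_sqrt.tendsto (c i)).comp (hconv i)
  -- main balance
  have hΔdiv : Tendsto (fun t : ℕ => (s0 * (N 0 t : ℝ) - s1 * (N 1 t : ℝ)) / t)
      atTop (nhds 0) := by
    rw [Metric.tendsto_atTop]
    intro ε hε
    have hε' : 0 < ε / 4 := by linarith
    obtain ⟨T0, hT0⟩ := Metric.tendsto_atTop.1 (hsq 0) (ε / 4) hε'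
    obtain ⟨T1, hT1⟩ := Metric.tendsto_atTop.1 (hsq 1) (ε / 4) hε'
    set T := max 2 (max T0 T1) with hTdef
    set K := |s0 * (N 0 T : ℝ) - s1 * (N 1 T : ℝ)| + 1 with hK
    have hK1 : 1 ≤ K := by rw [hK]; linarith [abs_nonneg (s0 * (N 0 T : ℝ) - s1 * (N 1 T : ℝ))]
    have key : ∀ t, T ≤ t →
        |s0 * (N 0 t : ℝ) - s1 * (N 1 t : ℝ)| ≤ K + 2 * (ε / 4) * t := by
      intro t ht
      induction t, ht using Nat.le_induction with
      | base =>
        rw [hK]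
        have : (0 : ℝ) ≤ 2 * (ε / 4) * T := by positivity
        linarith
      | succ t ht IH =>
        have h2t : 2 ≤ t := le_trans (le_max_left _ _) ht
        have hr := hrule t h2t
        have hb0 : |Real.sqrt (chat 0 t) - s0| < ε / 4 := by
          have := hT0 t (le_trans (le_trans (le_max_left _ _) (le_max_right _ _)) ht)
          simpa [Real.dist_eq] using this
        have hb1 : |Real.sqrt (chat 1 t) - s1| < ε / 4 := by
          have := hT1 t (le_trans (le_trans (le_max_right _ _) (le_max_right _ _)) ht)
          simpa [Real.dist_eq] using this
        have hN0t : (N 0 t : ℝ) ≤ t := by exact_mod_cast hNle 0 t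
        have hN1t : (N 1 t : ℝ) ≤ t := by exact_mod_cast hNle 1 t
        have hN0nn : (0 : ℝ) ≤ (N 0 t : ℝ) := Nat.cast_nonneg _
        have hN1nn : (0 : ℝ) ≤ (N 1 t : ℝ) := Nat.cast_nonneg _
        have m0 : 0 ≤ (ε / 4) * ((t : ℝ) - N 0 t) := mul_nonneg hε'.le (by linarith)
        have m1 : 0 ≤ (ε / 4) * ((t : ℝ) - N 1 t) := mul_nonneg hε'.le (by linarith)
        rcases le_or_gt (Real.sqrt (chat 1 t) * (N 1 t : ℝ))
            (Real.sqrt (chat 0 t) * (N 0 t : ℝ)) with hcond | hcond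
        · -- pull (t+1) = 1
          have hp : pull (t + 1) = 1 := by rw [hr, if_pos hcond]
          have e0 : N 0 (t + 1) = N 0 t := by rw [hNsucc 0 t, hp]; simp
          have e1 : N 1 (t + 1) = N 1 t + 1 := by rw [hNsucc 1 t, hp]; simp
          have q1 : s1 * (N 1 t : ℝ) ≤ (Real.sqrt (chat 1 t) + ε / 4) * (N 1 t : ℝ) :=
            mul_le_mul_of_nonneg_right (by linarith [(abs_lt.1 hb1).1]) hN1nn
          have q0 : Real.sqrt (chat 0 t) * (N 0 t : ℝ) ≤ (s0 + ε / 4) * (N 0 t : ℝ) :=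
            mul_le_mul_of_nonneg_right (by linarith [(abs_lt.1 hb0).2]) hN0nn
          have hbal : s1 * (N 1 t : ℝ) ≤ s0 * (N 0 t : ℝ) + 2 * (ε / 4) * t := by
            linarith [q1, q0, hcond, m0, m1]
          rw [e0, e1, abs_le]
          push_cast
          constructor
          · linarith [hbal, hK1, hε'.le]
          · have := (abs_le.1 IH).2
            linarith [this, hs1.le, hε'.le]
        · -- pull (t+1) = 0
          have hp : pull (t + 1) = 0 := by rw [hr, if_neg (not_le.2 hcond)]
          have e0 : N 0 (t + 1) = N 0 t + 1 := by rw [hNsucc 0 t, hp]; simp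
          have e1 : N 1 (t + 1) = N 1 t := by rw [hNsucc 1 t, hp]; simp
          have q0 : s0 * (N 0 t : ℝ) ≤ (Real.sqrt (chat 0 t) + ε / 4) * (N 0 t : ℝ) :=
            mul_le_mul_of_nonneg_right (by linarith [(abs_lt.1 hb0).1]) hN0nn
          have q1 : Real.sqrt (chat 1 t) * (N 1 t : ℝ) ≤ (s1 + ε / 4) * (N 1 t : ℝ) :=
            mul_le_mul_of_nonneg_right (by linarith [(abs_lt.1 hb1).2]) hN1nn
          have hbal : s0 * (N 0 t : ℝ) ≤ s1 * (N 1 t : ℝ) + 2 * (ε / 4) * t := by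
            linarith [q1, q0, hcond.le, m0, m1]
          rw [e0, e1, abs_le]
          push_cast
          constructor
          · have := (abs_le.1 IH).1
            linarith [this, hs0.le, hε'.le]
          · linarith [hbal, hK1, hs0le, hε'.le]
    obtain ⟨M, hM⟩ := exists_nat_gt (K / (ε / 4))
    refine ⟨max T (M + 1), fun t ht => ?_⟩
    have htT : T ≤ t := le_trans (le_max_left _ _) ht
    have htM : (M : ℝ) + 1 ≤ t := by exact_mod_cast le_trans (le_max_right _ _) ht
    have htpos : (0 : ℝ) < t := lt_of_lt_of_le (by positivity) htM
    have hKlt : K < (ε / 4) * t := by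
      have h1' : K < M * (ε / 4) := (div_lt_iff₀ hε').1 hM
      have h2' : (ε / 4) * (M : ℝ) ≤ (ε / 4) * t := mul_le_mul_of_nonneg_left (by linarith) hε'.le
      linarith
    have hkey := key t htT
    rw [Real.dist_eq, sub_zero, abs_div, abs_of_pos htpos, div_lt_iff₀ htpos]
    linarith [hkey, hKlt, mul_pos hε' htpos]
  -- convergence of N i t / t
  have hrel : ∀ t : ℕ, (N 1 t : ℝ) = t - N 0 t := by
    intro t
    have h := hNsum t
    have : ((N 0 t : ℝ) + N 1 t) = t := by exact_mod_cast congrArg (Nat.cast : ℕ → ℝ) h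
    linarith
  have hN0div : Tendsto (fun t : ℕ => (N 0 t : ℝ) / t) atTop (nhds (s1 / (s0 + s1))) := by
    have haux : Tendsto
        (fun t : ℕ => ((s0 * (N 0 t : ℝ) - s1 * (N 1 t : ℝ)) / t + s1) / (s0 + s1))
        atTop (nhds ((0 + s1) / (s0 + s1))) :=
      (hΔdiv.add tendsto_const_nhds).div_const _
    rw [show (0 + s1) / (s0 + s1) = s1 / (s0 + s1) by ring] at haux
    refine Tendsto.congr' ?_ haux
    filter_upwards [eventually_ge_atTop 1] with t ht
    have htpos : (0 : ℝ) < t := by exact_mod_cast Nat.lt_of_lt_of_le Nat.zero_lt_one ht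
    rw [hrel t]
    field_simp
    ring
  have hN1div : Tendsto (fun t : ℕ => (N 1 t : ℝ) / t) atTop (nhds (s0 / (s0 + s1))) := by
    have haux : Tendsto
        (fun t : ℕ => (s0 - (s0 * (N 0 t : ℝ) - s1 * (N 1 t : ℝ)) / t) / (s0 + s1))
        atTop (nhds ((s0 - 0) / (s0 + s1))) :=
      (tendsto_const_nhds.sub hΔdiv).div_const _
    rw [show (s0 - 0) / (s0 + s1) = s0 / (s0 + s1) by ring] at haux
    refine Tendsto.congr' ?_ haux
    filter_upwards [eventually_ge_atTop 1] with t ht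
    have htpos : (0 : ℝ) < t := by exact_mod_cast Nat.lt_of_lt_of_le Nat.zero_lt_one ht
    rw [hrel t]
    field_simp
    ring
  have hJdiv : Tendsto (fun t : ℕ => J t / t) atTop (nhds (s0 * s1)) := by
    have haux : Tendsto
        (fun t : ℕ => chat 0 t * ((N 0 t : ℝ) / t) + chat 1 t * ((N 1 t : ℝ) / t))
        atTop (nhds (c 0 * (s1 / (s0 + s1)) + c 1 * (s0 / (s0 + s1)))) :=
      ((hconv 0).mul hN0div).add ((hconv 1).mul hN1div)
    have heq : c 0 * (s1 / (s0 + s1)) + c 1 * (s0 / (s0 + s1)) = s0 * s1 := by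
      rw [hc0eq, hc1eq]; field_simp
    rw [heq] at haux
    refine Tendsto.congr (fun t => ?_) haux
    simp only [J]
    ring
  intro i
  have hJne : s0 * s1 ≠ 0 := by positivity
  have main : ∀ p : ℝ, Tendsto (fun t : ℕ => (N i t : ℝ) / t) atTop (nhds p) →
      Tendsto (fun t : ℕ => chat i t * (N i t : ℝ) / J t) atTop
        (nhds (c i * p / (s0 * s1))) := by
    intro p hp
    have h := ((hconv i).mul hp).div hJdiv hJne
    refine Tendsto.congr' ?_ h
    filter_upwards [eventually_ge_atTop 1] with t ht
    have htne : ((t : ℝ)) ≠ 0 := by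
      have : (0 : ℝ) < t := by exact_mod_cast Nat.lt_of_lt_of_le Nat.zero_lt_one ht
      linarith
    rcases eq_or_ne (J t) 0 with hJ0 | hJ0
    · simp [hJ0]
    · simp only [Pi.div_apply]; field_simp
  have hi : i = 0 ∨ i = 1 := by fin_cases i <;> simp
  rcases hi with rfl | rfl
  · have h := main _ hN0div
    have heq : c 0 * (s1 / (s0 + s1)) / (s0 * s1) = s0 / (s0 + s1) := by
      rw [hc0eq]; field_simp
    rw [heq] at h
    exact h
  · have h := main _ hN1div
    have heq : c 1 * (s0 / (s0 + s1)) / (s0 * s1) = s1 / (s0 + s1) := by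
      rw [hc1eq]; field_simp
    rw [heq] at h
    exact h
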